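/- Let $G$ be an abelian group with no element of order 2 and no element of order 3. Then the quandle ring $\mathbb{Z}[\operatorname{Core}(G)]$ has no non-trivial idempotent whose support has at most three elements; i.e., if $u = \alpha e_x + \beta e_y + \gamma e_z$ with $x, y, z \in G$ distinct and $\alpha, \beta, \gamma \in \mathbb{Z}$ satisfies $u^2 = u$ and $u \neq 0$, then $u$ equals $e_x$, $e_y$, or $e_z$. -/

import Mathlib

/-- The core quandle of an abelian group: same carrier, operation `x * y = 2y - x`. -/
def CoreQ (G : Type*) := G

instance {G : Type*} [AddCommGroup G] : Mul (CoreQ G) :=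
  ⟨fun x y => show G from (2 : ℤ) • (show G from y) - (show G from x)⟩

private lemma solve3 (α β γ : ℤ) (hα : α*α = α) (hβ : β*β = β) (hγ : γ*γ = γ)
    (hαβ : α*β = 0) (hαγ : α*γ = 0) (hβγ : β*γ = 0) (hnz : ¬(α=0 ∧ β=0 ∧ γ=0)) :
    (α=1 ∧ β=0 ∧ γ=0) ∨ (α=0 ∧ β=1 ∧ γ=0) ∨ (α=0 ∧ β=0 ∧ γ=1) := by
  have h1 : α = 0 ∨ α = 1 := by
    rcases mul_eq_zero.mp (show α*(α-1) = 0 by linear_combination hα) with h|h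
    · exact Or.inl h
    · exact Or.inr (by omega)
  have h2 : β = 0 ∨ β = 1 := by
    rcases mul_eq_zero.mp (show β*(β-1) = 0 by linear_combination hβ) with h|h
    · exact Or.inl h
    · exact Or.inr (by omega)
  have h3 : γ = 0 ∨ γ = 1 := by
    rcases mul_eq_zero.mp (show γ*(γ-1) = 0 by linear_combination hγ) with h|h
    · exact Or.inl h
    · exact Or.inr (by omega)
  rcases h1 with rfl|rfl <;> rcases h2 with rfl|rfl <;> rcases h3 with rfl|rfl <;> simp_all

/-- If `G` is abelian with no 2-torsion and no 3-torsion, then `ℤ[Core(G)]` has no non-trivial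
idempotent supported on at most three basis elements. -/
theorem stmt8 {G : Type*} [AddCommGroup G]
    (h2 : ∀ g : G, (2 : ℤ) • g = 0 → g = 0) (h3 : ∀ g : G, (3 : ℤ) • g = 0 → g = 0)
    (x y z : CoreQ G) (hxy : x ≠ y) (hyz : y ≠ z) (hxz : x ≠ z)
    (α β γ : ℤ) (u : MonoidAlgebra ℤ (CoreQ G))
    (hu : u = α • MonoidAlgebra.single x (1 : ℤ) + β • MonoidAlgebra.single y (1 : ℤ)
        + γ • MonoidAlgebra.single z (1 : ℤ))
    (hid : u * u = u) (hne : u ≠ 0) :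
    u = MonoidAlgebra.single x (1 : ℤ) ∨ u = MonoidAlgebra.single y (1 : ℤ) ∨
      u = MonoidAlgebra.single z (1 : ℤ) := by
  classical
  have d2 : ∀ a b : G, (2:ℤ) • (a - b) = 0 → a = b := by
    intro a b h; have := h2 _ h; rwa [sub_eq_zero] at this
  have d3 : ∀ a b : G, (3:ℤ) • (a - b) = 0 → a = b := by
    intro a b h; have := h3 _ h; rwa [sub_eq_zero] at this
  have hu' : u = MonoidAlgebra.single x α + MonoidAlgebra.single y β
      + MonoidAlgebra.single z γ := by
    simp only [hu, MonoidAlgebra.smul_single', mul_one]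
  have hxx : ∀ a : CoreQ G, a * a = a := by
    intro a
    show (2:ℤ) • (show G from a) - (show G from a) = (show G from a)
    rw [two_smul]; abel
  have hu2 : u * u =
      MonoidAlgebra.single x (α*α) + MonoidAlgebra.single (x*y) (α*β)
      + MonoidAlgebra.single (x*z) (α*γ)
      + MonoidAlgebra.single (y*x) (α*β) + MonoidAlgebra.single y (β*β)
      + MonoidAlgebra.single (y*z) (β*γ)
      + MonoidAlgebra.single (z*x) (α*γ) + MonoidAlgebra.single (z*y) (β*γ)
      + MonoidAlgebra.single z (γ*γ) := by
    rw [hu']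
    simp only [add_mul, mul_add, MonoidAlgebra.single_mul_single, hxx]
    rw [mul_comm β α, mul_comm γ α, mul_comm γ β]
    abel
  have ev : ∀ w : CoreQ G,
      (if x = w then α*α else 0) + (if x*y = w then α*β else 0) + (if x*z = w then α*γ else 0)
      + (if y*x = w then α*β else 0) + (if y = w then β*β else 0) + (if y*z = w then β*γ else 0)
      + (if z*x = w then α*γ else 0) + (if z*y = w then β*γ else 0) + (if z = w then γ*γ else 0)
      = (if x = w then α else 0) + (if y = w then β else 0) + (if z = w then γ else 0) := by
    intro w
    have hu2' : (u*u).coeff =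
        Finsupp.single x (α*α) + Finsupp.single (x*y) (α*β) + Finsupp.single (x*z) (α*γ)
        + Finsupp.single (y*x) (α*β) + Finsupp.single y (β*β) + Finsupp.single (y*z) (β*γ)
        + Finsupp.single (z*x) (α*γ) + Finsupp.single (z*y) (β*γ)
        + Finsupp.single z (γ*γ) := congrArg MonoidAlgebra.coeff hu2
    have hu'' : u.coeff =
        Finsupp.single x α + Finsupp.single y β + Finsupp.single z γ := congrArg MonoidAlgebra.coeff hu'
    have hid' : (u*u).coeff = u.coeff := congrArg MonoidAlgebra.coeff hid
    rw [hu2', hu''] at hid'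
    have h := DFunLike.congr_fun hid' w
    simpa only [Finsupp.add_apply, Finsupp.single_apply] using h
  set X : G := (show G from x) with hXdef
  set Y : G := (show G from y) with hYdef
  set Z : G := (show G from z) with hZdef
  have ev' : ∀ w : G,
      (if X = w then α*α else 0) + (if (2:ℤ)•Y - X = w then α*β else 0)
      + (if (2:ℤ)•Z - X = w then α*γ else 0)
      + (if (2:ℤ)•X - Y = w then α*β else 0) + (if Y = w then β*β else 0)
      + (if (2:ℤ)•Z - Y = w then β*γ else 0)
      + (if (2:ℤ)•X - Z = w then α*γ else 0) + (if (2:ℤ)•Y - Z = w then β*γ else 0)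
      + (if Z = w then γ*γ else 0)
      = (if X = w then α else 0) + (if Y = w then β else 0) + (if Z = w then γ else 0) :=
    fun w => ev (show CoreQ G from w)
  clear ev hu2 hid hxx
  have hxy' : X ≠ Y := hxy
  have hyz' : Y ≠ Z := hyz
  have hxz' : X ≠ Z := hxz
  -- the goal conversion helper
  have hnz : ¬(α = 0 ∧ β = 0 ∧ γ = 0) := by
    rintro ⟨rfl, rfl, rfl⟩
    apply hne
    rw [hu]; simp
  have fin : (α=1 ∧ β=0 ∧ γ=0) ∨ (α=0 ∧ β=1 ∧ γ=0) ∨ (α=0 ∧ β=0 ∧ γ=1) →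
      (u = MonoidAlgebra.single x (1 : ℤ) ∨ u = MonoidAlgebra.single y (1 : ℤ) ∨
        u = MonoidAlgebra.single z (1 : ℤ)) := by
    rintro (⟨rfl, rfl, rfl⟩|⟨rfl, rfl, rfl⟩|⟨rfl, rfl, rfl⟩)
    · left; rw [hu]; simp; rfl
    · right; left; rw [hu]; simp; rfl
    · right; right; rw [hu]; simp; rfl
  -- global disequalities
  have nAx : (2:ℤ)•Y - X ≠ X := fun h => hxy' (d2 Y X (by linear_combination (norm := module) h)).symm
  have nAy : (2:ℤ)•Y - X ≠ Y := fun h => hxy' (by linear_combination (norm := module) -h)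
  have nBx : (2:ℤ)•X - Y ≠ X := fun h => hxy' (by linear_combination (norm := module) h)
  have nBy : (2:ℤ)•X - Y ≠ Y := fun h => hxy' (d2 X Y (by linear_combination (norm := module) h))
  have nCx : (2:ℤ)•Z - X ≠ X := fun h => hxz' (d2 Z X (by linear_combination (norm := module) h)).symm
  have nCz : (2:ℤ)•Z - X ≠ Z := fun h => hxz' (by linear_combination (norm := module) -h)
  have nDx : (2:ℤ)•X - Z ≠ X := fun h => hxz' (by linear_combination (norm := module) h)
  have nDz : (2:ℤ)•X - Z ≠ Z := fun h => hxz' (d2 X Z (by linear_combination (norm := module) h))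
  have nEy : (2:ℤ)•Z - Y ≠ Y := fun h => hyz' (d2 Y Z (by linear_combination (norm := module) -h))
  have nEz : (2:ℤ)•Z - Y ≠ Z := fun h => hyz' (by linear_combination (norm := module) -h)
  have nFy : (2:ℤ)•Y - Z ≠ Y := fun h => hyz' (by linear_combination (norm := module) h)
  have nFz : (2:ℤ)•Y - Z ≠ Z := fun h => hyz' (d2 Y Z (by linear_combination (norm := module) h))
  have nAB : (2:ℤ)•Y - X ≠ (2:ℤ)•X - Y := fun h => hxy' (d3 X Y (by linear_combination (norm := module) -h))
  have nCD : (2:ℤ)•Z - X ≠ (2:ℤ)•X - Z := fun h => hxz' (d3 X Z (by linear_combination (norm := module) -h))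
  have nEF : (2:ℤ)•Z - Y ≠ (2:ℤ)•Y - Z := fun h => hyz' (d3 Y Z (by linear_combination (norm := module) -h))
  have nAC : (2:ℤ)•Y - X ≠ (2:ℤ)•Z - X := fun h => hyz' (d2 Y Z (by linear_combination (norm := module) h))
  have nAF : (2:ℤ)•Y - X ≠ (2:ℤ)•Y - Z := fun h => hxz' (by linear_combination (norm := module) -h)
  have nBD : (2:ℤ)•X - Y ≠ (2:ℤ)•X - Z := fun h => hyz' (by linear_combination (norm := module) -h)
  have nBE : (2:ℤ)•X - Y ≠ (2:ℤ)•Z - Y := fun h => hxz' (d2 X Z (by linear_combination (norm := module) h))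
  have nCE : (2:ℤ)•Z - X ≠ (2:ℤ)•Z - Y := fun h => hxy' (by linear_combination (norm := module) -h)
  have nDF : (2:ℤ)•X - Z ≠ (2:ℤ)•Y - Z := fun h => hxy' (d2 X Y (by linear_combination (norm := module) h))
  have sq01 : ∀ t : ℤ, t*t = t → t = 0 ∨ t = 1 := by
    intro t ht
    rcases mul_eq_zero.mp (show t*(t-1) = 0 by linear_combination ht) with h|h
    · exact Or.inl h
    · exact Or.inr (by omega)
  by_cases hP : X + Y = (2:ℤ)•Z
  · -- case P : x + y = 2z
    have nQ : ¬(X + Z = (2:ℤ)•Y) := fun hQ => hyz' (d3 Y Z (by linear_combination (norm := module) hP - hQ))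
    have nR : ¬(Y + Z = (2:ℤ)•X) := fun hR => hxz' (d3 X Z (by linear_combination (norm := module) hP - hR))
    have hEx : (2:ℤ)•Z - Y = X := by linear_combination (norm := module) -hP
    have hCy : (2:ℤ)•Z - X = Y := by linear_combination (norm := module) -hP
    have nAz : (2:ℤ)•Y - X ≠ Z := fun h => nQ (by linear_combination (norm := module) -h)
    have nBz : (2:ℤ)•X - Y ≠ Z := fun h => nR (by linear_combination (norm := module) -h)
    have nDy : (2:ℤ)•X - Z ≠ Y := fun h => nR (by linear_combination (norm := module) -h)
    have nFx : (2:ℤ)•Y - Z ≠ X := fun h => nQ (by linear_combination (norm := module) -h)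
    have eX := ev' X
    simp only [hEx, hCy, nAx, nBx, nDx, nFx, Ne.symm hxy', Ne.symm hxz',
      eq_self_iff_true, if_true, if_false, add_zero, zero_add] at eX
    have eY := ev' Y
    simp only [hEx, hCy, nAy, nBy, nDy, nFy, hxy', Ne.symm hyz',
      eq_self_iff_true, if_true, if_false, add_zero, zero_add] at eY
    have eZ := ev' Z
    simp only [hEx, hCy, nAz, nBz, nDz, nFz, hxz', hyz',
      eq_self_iff_true, if_true, if_false, add_zero, zero_add] at eZ
    by_cases h5 : (2:ℤ)•Y - X = (2:ℤ)•X - Z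
    · have hBF : (2:ℤ)•X - Y = (2:ℤ)•Y - Z := by linear_combination (norm := module) -h5 - hP
      have eA := ev' ((2:ℤ)•Y - X)
      simp only [hEx, hCy, h5.symm, hBF, Ne.symm nAx, Ne.symm nAy, Ne.symm nAB, Ne.symm nAF,
        Ne.symm nAz, Ne.symm nAC, eq_self_iff_true, if_true, if_false, add_zero, zero_add] at eA
      have eB := ev' ((2:ℤ)•X - Y)
      simp only [hEx, hCy, h5.symm, hBF, Ne.symm nFx, nAF, Ne.symm nFy, Ne.symm nFz, nDF,
        Ne.symm nBx, Ne.symm nBy, Ne.symm nBz, Ne.symm nAB, Ne.symm nBD, Ne.symm nBE,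
        eq_self_iff_true, if_true, if_false, add_zero, zero_add] at eB
      rcases sq01 γ eZ with rfl|rfl
      · refine fin (solve3 α β 0 ?_ ?_ ?_ ?_ (mul_zero α) (mul_zero β) hnz)
        · linarith [eX]
        · linarith [eY]
        · exact eZ
        · linarith [eA, mul_zero α]
      · simp only [mul_one] at eX eY eA eB
        have hab : α = β := by linarith [eA, eB]
        have ha0 : α = 0 := by
          have h0 : α * α = 0 := by rw [hab] at eX ⊢; linarith [eA, eX]
          exact mul_self_eq_zero.mp h0
        refine fin (Or.inr (Or.inr ⟨ha0, by omega, rfl⟩))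
    · have nBF : (2:ℤ)•X - Y ≠ (2:ℤ)•Y - Z := fun h => h5 (by linear_combination (norm := module) -h - hP)
      have eA := ev' ((2:ℤ)•Y - X)
      simp only [hEx, hCy, Ne.symm nAx, Ne.symm nAy, Ne.symm nAB, Ne.symm nAF, Ne.symm nAz,
        Ne.symm nAC, Ne.symm h5,
        eq_self_iff_true, if_true, if_false, add_zero, zero_add] at eA
      have eD := ev' ((2:ℤ)•X - Z)
      simp only [hEx, hCy, Ne.symm nDx, Ne.symm nDy, Ne.symm nDz, h5, nBD, Ne.symm nDF,
        Ne.symm nCD, eq_self_iff_true, if_true, if_false, add_zero, zero_add] at eD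
      have eF := ev' ((2:ℤ)•Y - Z)
      simp only [hEx, hCy, Ne.symm nFx, Ne.symm nFy, Ne.symm nFz, nAF, nBF, nDF,
        eq_self_iff_true, if_true, if_false, add_zero, zero_add] at eF
      refine fin (solve3 α β γ ?_ ?_ ?_ eA eD eF hnz)
      · linarith [eX, eF]
      · linarith [eY, eD]
      · exact eZ
  by_cases hQ : X + Z = (2:ℤ)•Y
  · -- case Q : x + z = 2y
    have nP : ¬(X + Y = (2:ℤ)•Z) := fun h => hyz' (d3 Y Z (by linear_combination (norm := module) h - hQ))
    have nR : ¬(Y + Z = (2:ℤ)•X) := fun h => hxy' (d3 X Y (by linear_combination (norm := module) hQ - h))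
    have hAz : (2:ℤ)•Y - X = Z := by linear_combination (norm := module) -hQ
    have hFx : (2:ℤ)•Y - Z = X := by linear_combination (norm := module) -hQ
    have nCy : (2:ℤ)•Z - X ≠ Y := fun h => nP (by linear_combination (norm := module) -h)
    have nEx : (2:ℤ)•Z - Y ≠ X := fun h => nP (by linear_combination (norm := module) -h)
    have nBz : (2:ℤ)•X - Y ≠ Z := fun h => nR (by linear_combination (norm := module) -h)
    have nDy : (2:ℤ)•X - Z ≠ Y := fun h => nR (by linear_combination (norm := module) -h)
    have eX := ev' X
    simp only [hAz, hFx, nCx, nBx, nEx, nDx, Ne.symm hxy', Ne.symm hxz',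
      eq_self_iff_true, if_true, if_false, add_zero, zero_add] at eX
    have eY := ev' Y
    simp only [hAz, hFx, nCy, nBy, nEy, nDy, hxy', Ne.symm hyz',
      eq_self_iff_true, if_true, if_false, add_zero, zero_add] at eY
    have eZ := ev' Z
    simp only [hAz, hFx, nCz, nBz, nEz, nDz, hxz', hyz',
      eq_self_iff_true, if_true, if_false, add_zero, zero_add] at eZ
    by_cases h5 : (2:ℤ)•X - Y = (2:ℤ)•Z - X
    · have hDE : (2:ℤ)•X - Z = (2:ℤ)•Z - Y := by linear_combination (norm := module) h5 - hQ
      have eB := ev' ((2:ℤ)•X - Y)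
      simp only [hAz, hFx, h5, hDE, nAC, Ne.symm nCx, Ne.symm nCy, Ne.symm nCE, Ne.symm nCz,
        nBE, eq_self_iff_true, if_true, if_false, add_zero, zero_add] at eB
      have eE := ev' ((2:ℤ)•Z - Y)
      simp only [hAz, hFx, h5, hDE, Ne.symm nEx, Ne.symm nEz, nCE, Ne.symm nEy,
        eq_self_iff_true, if_true, if_false, add_zero, zero_add] at eE
      rcases sq01 β eY with rfl|rfl
      · refine fin (solve3 α 0 γ ?_ ?_ ?_ (mul_zero α) ?_ (zero_mul γ) hnz)
        · linarith [eX, zero_mul γ]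
        · exact eY
        · linarith [eZ, mul_zero α]
        · linarith [eB, mul_zero α]
      · simp only [mul_one, one_mul] at eX eZ eB eE
        have hab : α = γ := by linarith [eB, eE]
        have ha0 : α = 0 := by
          have h0 : α * α = 0 := by rw [hab] at eX ⊢; linarith [eB, eX]
          exact mul_self_eq_zero.mp h0
        refine fin (Or.inr (Or.inl ⟨ha0, rfl, by omega⟩))
    · have nDE : (2:ℤ)•X - Z ≠ (2:ℤ)•Z - Y := fun h => h5 (by linear_combination (norm := module) h + hQ)
      have eB := ev' ((2:ℤ)•X - Y)
      simp only [hAz, hFx, Ne.symm nBx, Ne.symm nBz, Ne.symm h5, Ne.symm nBy, Ne.symm nBE,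
        Ne.symm nBD, eq_self_iff_true, if_true, if_false, add_zero, zero_add] at eB
      have eC := ev' ((2:ℤ)•Z - X)
      simp only [hAz, hFx, Ne.symm nCx, Ne.symm nCz, h5, Ne.symm nCy, Ne.symm nCE, Ne.symm nCD,
        eq_self_iff_true, if_true, if_false, add_zero, zero_add] at eC
      have eE := ev' ((2:ℤ)•Z - Y)
      simp only [hAz, hFx, Ne.symm nEx, Ne.symm nEz, nCE, nBE, Ne.symm nEy, nDE,
        eq_self_iff_true, if_true, if_false, add_zero, zero_add] at eE
      refine fin (solve3 α β γ ?_ eY ?_ eB eC eE hnz)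
      · linarith [eX, eE]
      · linarith [eZ, eB]
  by_cases hR : Y + Z = (2:ℤ)•X
  · -- case R : y + z = 2x
    have nP : ¬(X + Y = (2:ℤ)•Z) := fun h => hxz' (d3 X Z (by linear_combination (norm := module) h - hR))
    have nQ : ¬(X + Z = (2:ℤ)•Y) := fun h => hxy' (d3 X Y (by linear_combination (norm := module) h - hR))
    have hBz : (2:ℤ)•X - Y = Z := by linear_combination (norm := module) -hR
    have hDy : (2:ℤ)•X - Z = Y := by linear_combination (norm := module) -hR
    have nAz : (2:ℤ)•Y - X ≠ Z := fun h => nQ (by linear_combination (norm := module) -h)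
    have nFx : (2:ℤ)•Y - Z ≠ X := fun h => nQ (by linear_combination (norm := module) -h)
    have nCy : (2:ℤ)•Z - X ≠ Y := fun h => nP (by linear_combination (norm := module) -h)
    have nEx : (2:ℤ)•Z - Y ≠ X := fun h => nP (by linear_combination (norm := module) -h)
    have eX := ev' X
    simp only [hBz, hDy, nAx, nCx, nEx, nFx, Ne.symm hxy', Ne.symm hxz',
      eq_self_iff_true, if_true, if_false, add_zero, zero_add] at eX
    have eY := ev' Y
    simp only [hBz, hDy, nAy, nCy, nEy, nFy, hxy', Ne.symm hyz',
      eq_self_iff_true, if_true, if_false, add_zero, zero_add] at eY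
    have eZ := ev' Z
    simp only [hBz, hDy, nAz, nCz, nEz, nFz, hxz', hyz',
      eq_self_iff_true, if_true, if_false, add_zero, zero_add] at eZ
    by_cases h5 : (2:ℤ)•Y - X = (2:ℤ)•Z - Y
    · have hCF : (2:ℤ)•Z - X = (2:ℤ)•Y - Z := by linear_combination (norm := module) -h5 + hR
      have eA := ev' ((2:ℤ)•Y - X)
      simp only [hBz, hDy, h5, hCF, Ne.symm nEx, Ne.symm nEF, Ne.symm nEz, Ne.symm nEy,
        eq_self_iff_true, if_true, if_false, add_zero, zero_add] at eA
      have eC := ev' ((2:ℤ)•Z - X)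
      simp only [hBz, hDy, h5, hCF, Ne.symm nFx, nEF, Ne.symm nFz, Ne.symm nFy,
        eq_self_iff_true, if_true, if_false, add_zero, zero_add] at eC
      rcases sq01 α eX with rfl|rfl
      · refine fin (solve3 0 β γ eX ?_ ?_ (zero_mul β) (zero_mul γ) ?_ hnz)
        · linarith [eY, zero_mul γ]
        · linarith [eZ, zero_mul β]
        · linarith [eA, zero_mul β]
      · simp only [mul_one, one_mul] at eY eZ eA eC
        have hab : β = γ := by linarith [eA, eC]
        have hb0 : β = 0 := by
          have h0 : β * β = 0 := by rw [hab] at eY ⊢; linarith [eA, eY]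
          exact mul_self_eq_zero.mp h0
        refine fin (Or.inl ⟨rfl, hb0, by omega⟩)
    · have nCF : (2:ℤ)•Z - X ≠ (2:ℤ)•Y - Z := fun h => h5 (by linear_combination (norm := module) -h + hR)
      have eA := ev' ((2:ℤ)•Y - X)
      simp only [hBz, hDy, Ne.symm nAx, Ne.symm nAC, Ne.symm nAz, Ne.symm nAy, Ne.symm h5,
        Ne.symm nAF, eq_self_iff_true, if_true, if_false, add_zero, zero_add] at eA
      have eC := ev' ((2:ℤ)•Z - X)
      simp only [hBz, hDy, Ne.symm nCx, nAC, Ne.symm nCz, Ne.symm nCy, Ne.symm nCE, Ne.symm nCF,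
        eq_self_iff_true, if_true, if_false, add_zero, zero_add] at eC
      have eE := ev' ((2:ℤ)•Z - Y)
      simp only [hBz, hDy, Ne.symm nEx, h5, nCE, Ne.symm nEz, Ne.symm nEy, Ne.symm nEF,
        eq_self_iff_true, if_true, if_false, add_zero, zero_add] at eE
      refine fin (solve3 α β γ eX ?_ ?_ eA eC eE hnz)
      · linarith [eY, eC]
      · linarith [eZ, eA]
  · -- case: no affine relation
    have nAz : (2:ℤ)•Y - X ≠ Z := fun h => hQ (by linear_combination (norm := module) -h)
    have nFx : (2:ℤ)•Y - Z ≠ X := fun h => hQ (by linear_combination (norm := module) -h)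
    have nBz : (2:ℤ)•X - Y ≠ Z := fun h => hR (by linear_combination (norm := module) -h)
    have nDy : (2:ℤ)•X - Z ≠ Y := fun h => hR (by linear_combination (norm := module) -h)
    have nCy : (2:ℤ)•Z - X ≠ Y := fun h => hP (by linear_combination (norm := module) -h)
    have nEx : (2:ℤ)•Z - Y ≠ X := fun h => hP (by linear_combination (norm := module) -h)
    have eX := ev' X
    simp only [nAx, nCx, nBx, nEx, nDx, nFx, Ne.symm hxy', Ne.symm hxz',
      eq_self_iff_true, if_true, if_false, add_zero, zero_add] at eX
    have eY := ev' Y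
    simp only [nAy, nCy, nBy, nEy, nDy, nFy, hxy', Ne.symm hyz',
      eq_self_iff_true, if_true, if_false, add_zero, zero_add] at eY
    have eZ := ev' Z
    simp only [nAz, nCz, nBz, nEz, nDz, nFz, hxz', hyz',
      eq_self_iff_true, if_true, if_false, add_zero, zero_add] at eZ
    rcases sq01 α eX with rfl|rfl <;> rcases sq01 β eY with rfl|rfl <;>
      rcases sq01 γ eZ with rfl|rfl
    · exact absurd ⟨rfl, rfl, rfl⟩ hnz
    · exact fin (Or.inr (Or.inr ⟨rfl, rfl, rfl⟩))
    · exact fin (Or.inr (Or.inl ⟨rfl, rfl, rfl⟩))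
    · -- (0,1,1) : evaluate at 2z - y
      have eE := ev' ((2:ℤ)•Z - Y)
      simp only [Ne.symm nEx, nCE, nBE, Ne.symm nEy, Ne.symm nEF, Ne.symm nEz,
        eq_self_iff_true, if_true, if_false, add_zero, zero_add] at eE
      split_ifs at eE <;> omega
    · exact fin (Or.inl ⟨rfl, rfl, rfl⟩)
    · -- (1,0,1) : evaluate at 2z - x
      have eC := ev' ((2:ℤ)•Z - X)
      simp only [Ne.symm nCx, nAC, Ne.symm nCy, Ne.symm nCE, Ne.symm nCD, Ne.symm nCz,
        eq_self_iff_true, if_true, if_false, add_zero, zero_add] at eC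
      split_ifs at eC <;> omega
    · -- (1,1,0) : evaluate at 2y - x
      have eA := ev' ((2:ℤ)•Y - X)
      simp only [Ne.symm nAx, Ne.symm nAC, Ne.symm nAB, Ne.symm nAy, Ne.symm nAF, Ne.symm nAz,
        eq_self_iff_true, if_true, if_false, add_zero, zero_add] at eA
      split_ifs at eA <;> omega
    · -- (1,1,1) : evaluate at 2y - x
      have eA := ev' ((2:ℤ)•Y - X)
      simp only [Ne.symm nAx, Ne.symm nAC, Ne.symm nAB, Ne.symm nAy, Ne.symm nAF, Ne.symm nAz,
        eq_self_iff_true, if_true, if_false, add_zero, zero_add] at eA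
      split_ifs at eA <;> omega
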